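/- Define φ : (0,∞) → ℝ by φ(x) = ((e^x+1)/2)·ln((e^x+1)/2) − ((e^x−1)/2)·ln((e^x−1)/2). Then φ is concave on (0,∞) and strictly monotonically increasing on (0,∞). Consequently, for any positive integer n and any real numbers ν₁, …, ν_n > 1, one has ∑_{j=1}^n φ(ln ν_j) ≤ n·φ((1/n)·∑_{j=1}^n ln ν_j). -/

import Mathlib

open scoped BigOperators

/-! Auxiliary definitions and lemmas. -/

noncomputable def Fφ (x : ℝ) : ℝ :=
  ((Real.exp x + 1) / 2) * Real.log ((Real.exp x + 1) / 2)
    - ((Real.exp x - 1) / 2) * Real.log ((Real.exp x - 1) / 2)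

noncomputable def Fφ' (x : ℝ) : ℝ :=
  (Real.exp x / 2) * (Real.log ((Real.exp x + 1) / 2) - Real.log ((Real.exp x - 1) / 2))

noncomputable def Fφ'' (x : ℝ) : ℝ :=
  Fφ' x + (Real.exp x / 2) *
    (Real.exp x / (Real.exp x + 1) - Real.exp x / (Real.exp x - 1))

lemma key_log {v : ℝ} (hv : 1 ≤ v) : Real.log v ≤ (v - v⁻¹) / 2 := by
  rcases eq_or_lt_of_le hv with h | h
  · simp [← h]
  · have h0 : 0 < Real.log v := Real.log_pos h
    have := (Real.self_lt_sinh_iff.2 h0).le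
    have hs : Real.sinh (Real.log v) = (v - v⁻¹) / 2 := by
      rw [Real.sinh_eq, Real.exp_log (by linarith), Real.exp_neg, Real.exp_log (by linarith)]
    linarith [hs ▸ this]

lemma log_ratio_le {t : ℝ} (ht : 1 < t) :
    Real.log (t + 1) - Real.log (t - 1) ≤ 2 * t / (t ^ 2 - 1) := by
  have hb : (0:ℝ) < t - 1 := by linarith
  have ha : (0:ℝ) < t + 1 := by linarith
  set v := Real.sqrt ((t + 1) / (t - 1)) with hvdef
  have hdiv1 : (1:ℝ) ≤ (t + 1) / (t - 1) := (one_le_div hb).2 (by linarith)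
  have hv1 : 1 ≤ v := by
    have h := Real.sqrt_le_sqrt hdiv1
    rwa [Real.sqrt_one] at h
  have hv0 : 0 < v := by linarith
  have hvsq : v ^ 2 = (t + 1) / (t - 1) := Real.sq_sqrt (by positivity)
  have hlog : Real.log (t + 1) - Real.log (t - 1) = 2 * Real.log v := by
    rw [hvdef, Real.log_sqrt (by positivity), Real.log_div ha.ne' hb.ne']
    ring
  have hkey := key_log hv1
  set s := Real.sqrt (t ^ 2 - 1) with hsdef
  have hs0 : 0 < s := Real.sqrt_pos.2 (by nlinarith)
  have hssq : s ^ 2 = t ^ 2 - 1 := Real.sq_sqrt (by nlinarith)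
  have hst : s ≤ t := by
    rw [hsdef]
    calc Real.sqrt (t ^ 2 - 1) ≤ Real.sqrt (t ^ 2) := Real.sqrt_le_sqrt (by nlinarith)
    _ = t := by rw [Real.sqrt_sq (by linarith)]
  have hvv : v - v⁻¹ = 2 / s := by
    have h1 : v * s = t + 1 := by
      rw [hvdef, hsdef, ← Real.sqrt_mul (by positivity)]
      rw [show (t + 1) / (t - 1) * (t ^ 2 - 1) = (t + 1) ^ 2 by field_simp; ring]
      exact Real.sqrt_sq ha.le
    have h2 : v⁻¹ * s = t - 1 := by
      have : v * (t - 1) = s := by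
        have hv2 : v ^ 2 * (t - 1) = t + 1 := by rw [hvsq]; field_simp
        nlinarith [hssq, hv0, hs0]
      field_simp [hv0.ne']
      linarith [this]
    field_simp [hv0.ne', hs0.ne']
    nlinarith [h1, h2]
  rw [hlog]
  calc 2 * Real.log v ≤ 2 * ((v - v⁻¹) / 2) := by linarith
  _ = v - v⁻¹ := by ring
  _ = 2 / s := hvv
  _ ≤ 2 * t / (t ^ 2 - 1) := by
      rw [div_le_div_iff₀ hs0 (by nlinarith)]
      nlinarith

lemma hasDerivAt_Fφ {x : ℝ} (hx : 0 < x) : HasDerivAt Fφ (Fφ' x) x := by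
  have ht : 1 < Real.exp x := by simpa using Real.exp_lt_exp.2 hx
  have hA : (0:ℝ) < (Real.exp x + 1) / 2 := by positivity
  have hB : (0:ℝ) < (Real.exp x - 1) / 2 := by linarith
  have hA' : HasDerivAt (fun y => (Real.exp y + 1) / 2) (Real.exp x / 2) x :=
    ((Real.hasDerivAt_exp x).add_const 1).div_const 2
  have hB' : HasDerivAt (fun y => (Real.exp y - 1) / 2) (Real.exp x / 2) x :=
    ((Real.hasDerivAt_exp x).sub_const 1).div_const 2
  have hlogA : HasDerivAt (fun y => Real.log ((Real.exp y + 1) / 2))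
      (((Real.exp x + 1) / 2)⁻¹ * (Real.exp x / 2)) x :=
    by have := (Real.hasDerivAt_log hA.ne').comp x hA'; exact this
  have hlogB : HasDerivAt (fun y => Real.log ((Real.exp y - 1) / 2))
      (((Real.exp x - 1) / 2)⁻¹ * (Real.exp x / 2)) x :=
    by have := (Real.hasDerivAt_log hB.ne').comp x hB'; exact this
  have h1 := hA'.mul hlogA
  have h2 := hB'.mul hlogB
  have h := h1.sub h2
  convert h using 1
  · rfl
  · rfl
  · rfl
  simp only [Fφ']
  rw [mul_inv_cancel_left₀ hA.ne', mul_inv_cancel_left₀ hB.ne']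
  ring

lemma hasDerivAt_Fφ' {x : ℝ} (hx : 0 < x) : HasDerivAt Fφ' (Fφ'' x) x := by
  have ht : 1 < Real.exp x := by simpa using Real.exp_lt_exp.2 hx
  have hA : (0:ℝ) < (Real.exp x + 1) / 2 := by positivity
  have hB : (0:ℝ) < (Real.exp x - 1) / 2 := by linarith
  have hlogA : HasDerivAt (fun y => Real.log ((Real.exp y + 1) / 2))
      (((Real.exp x + 1) / 2)⁻¹ * (Real.exp x / 2)) x :=
    by have := (Real.hasDerivAt_log hA.ne').comp x (((Real.hasDerivAt_exp x).add_const 1).div_const 2); exact this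
  have hlogB : HasDerivAt (fun y => Real.log ((Real.exp y - 1) / 2))
      (((Real.exp x - 1) / 2)⁻¹ * (Real.exp x / 2)) x :=
    by have := (Real.hasDerivAt_log hB.ne').comp x (((Real.hasDerivAt_exp x).sub_const 1).div_const 2); exact this
  have hE : HasDerivAt (fun y => Real.exp y / 2) (Real.exp x / 2) x :=
    (Real.hasDerivAt_exp x).div_const 2
  have h := hE.mul (hlogA.sub hlogB)
  convert h using 1
  · rfl
  · rfl
  · rfl
  simp only [Fφ'', Fφ']
  have e1 : ((Real.exp x + 1) / 2)⁻¹ * (Real.exp x / 2) = Real.exp x / (Real.exp x + 1) := by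
    rw [inv_div, div_mul_div_comm, mul_comm]
    rw [mul_div_mul_right _ _ (two_ne_zero)]
  have e2 : ((Real.exp x - 1) / 2)⁻¹ * (Real.exp x / 2) = Real.exp x / (Real.exp x - 1) := by
    rw [inv_div, div_mul_div_comm, mul_comm]
    rw [mul_div_mul_right _ _ (two_ne_zero)]
  rw [e1, e2]
  rfl

lemma Fφ'_pos {x : ℝ} (hx : 0 < x) : 0 < Fφ' x := by
  have ht : 1 < Real.exp x := by simpa using Real.exp_lt_exp.2 hx
  have hB : (0:ℝ) < (Real.exp x - 1) / 2 := by linarith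
  have hlt : Real.log ((Real.exp x - 1) / 2) < Real.log ((Real.exp x + 1) / 2) :=
    Real.log_lt_log hB (by linarith)
  have : (0:ℝ) < Real.exp x / 2 := by positivity
  simp only [Fφ']
  nlinarith

lemma Fφ''_nonpos {x : ℝ} (hx : 0 < x) : Fφ'' x ≤ 0 := by
  set t := Real.exp x with htdef
  have ht : 1 < t := by simpa [htdef] using Real.exp_lt_exp.2 hx
  have ha : (0:ℝ) < t + 1 := by linarith
  have hb : (0:ℝ) < t - 1 := by linarith
  have hlog := log_ratio_le ht
  have hL : Real.log ((t + 1) / 2) - Real.log ((t - 1) / 2)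
      = Real.log (t + 1) - Real.log (t - 1) := by
    rw [Real.log_div ha.ne' two_ne_zero, Real.log_div hb.ne' two_ne_zero]
    ring
  have hq : t ^ 2 - 1 ≠ 0 := by nlinarith
  have h2 : t / (t + 1) - t / (t - 1) = -(2 * t / (t ^ 2 - 1)) := by
    field_simp [ha.ne', hb.ne']
    ring
  simp only [Fφ'', Fφ', ← htdef]
  rw [hL, h2]
  have ht2 : 0 ≤ t / 2 := by linarith
  nlinarith [hlog, ht2]

lemma Fφ_concave : ConcaveOn ℝ (Set.Ioi 0) Fφ := by
  have hcont : ContinuousOn Fφ (Set.Ioi 0) := fun x hx =>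
    (hasDerivAt_Fφ hx).continuousAt.continuousWithinAt
  refine concaveOn_of_hasDerivWithinAt2_nonpos (f' := Fφ') (f'' := Fφ'')
    (convex_Ioi 0) hcont ?_ ?_ ?_
  · intro x hx
    rw [interior_Ioi] at hx
    exact (hasDerivAt_Fφ hx).hasDerivWithinAt
  · intro x hx
    rw [interior_Ioi] at hx
    exact (hasDerivAt_Fφ' hx).hasDerivWithinAt
  · intro x hx
    rw [interior_Ioi] at hx
    exact Fφ''_nonpos hx

lemma Fφ_strictMono : StrictMonoOn Fφ (Set.Ioi 0) := by
  have hcont : ContinuousOn Fφ (Set.Ioi 0) := fun x hx =>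
    (hasDerivAt_Fφ hx).continuousAt.continuousWithinAt
  refine strictMonoOn_of_hasDerivWithinAt_pos (f' := Fφ') (convex_Ioi 0) hcont ?_ ?_
  · intro x hx
    rw [interior_Ioi] at hx
    exact (hasDerivAt_Fφ hx).hasDerivWithinAt
  · intro x hx
    rw [interior_Ioi] at hx
    exact Fφ'_pos hx

/-- The function `φ(x) = ((eˣ+1)/2)·ln((eˣ+1)/2) − ((eˣ−1)/2)·ln((eˣ−1)/2)` is concave
and strictly increasing on `(0,∞)`; by Jensen's inequality, for `ν₁, …, ν_n > 1` one
has `∑_j φ(ln ν_j) ≤ n·φ((1/n)∑_j ln ν_j)`. -/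
theorem phi_concave_mono_jensen (φ : ℝ → ℝ)
    (hφ : ∀ x : ℝ, φ x =
      ((Real.exp x + 1) / 2) * Real.log ((Real.exp x + 1) / 2)
        - ((Real.exp x - 1) / 2) * Real.log ((Real.exp x - 1) / 2)) :
    ConcaveOn ℝ (Set.Ioi 0) φ ∧
    StrictMonoOn φ (Set.Ioi 0) ∧
    ∀ (n : ℕ), 0 < n → ∀ ν : Fin n → ℝ, (∀ j, 1 < ν j) →
      ∑ j, φ (Real.log (ν j)) ≤ (n : ℝ) * φ ((1 / (n : ℝ)) * ∑ j, Real.log (ν j)) := by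
  have hFeq : φ = Fφ := funext fun x => (hφ x).trans rfl
  subst hFeq
  refine ⟨Fφ_concave, Fφ_strictMono, ?_⟩
  intro n hn ν hν
  have hn' : (0:ℝ) < (n:ℝ) := by exact_mod_cast hn
  have hmem : ∀ j ∈ (Finset.univ : Finset (Fin n)),
      Real.log (ν j) ∈ Set.Ioi (0:ℝ) := fun j _ => Real.log_pos (hν j)
  have hw : ∑ _j : Fin n, (1 / (n:ℝ)) = 1 := by
    rw [Finset.sum_const, Finset.card_univ, Fintype.card_fin, nsmul_eq_mul]
    field_simp
  have hjensen := Fφ_concave.le_map_sum (w := fun _ => 1 / (n:ℝ))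
    (p := fun j => Real.log (ν j)) (fun _ _ => by positivity) hw hmem
  simp only [smul_eq_mul] at hjensen
  rw [← Finset.mul_sum, ← Finset.mul_sum] at hjensen
  calc ∑ j, Fφ (Real.log (ν j))
      = (n:ℝ) * ((1 / (n:ℝ)) * ∑ j, Fφ (Real.log (ν j))) := by
        field_simp
    _ ≤ (n:ℝ) * Fφ ((1 / (n:ℝ)) * ∑ j, Real.log (ν j)) := by
        exact mul_le_mul_of_nonneg_left hjensen hn'.le
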